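/- arXiv:math/0602118 — 3 statements merged into one kernel-verified Lean document; each statement's English description precedes it below -/
import Mathlib

section
/- If f : D → ℂⁿ is a bounded holomorphic map on the open unit disk with f(0) purely imaginary, satisfying |Im f(z)| ≤ R₁ on D and with nontangential boundary values satisfying |Re f| = R almost everywhere on ∂D, and R₁ < R, then a contradiction follows; equivalently, no such map exists when R₁ < R. -/
open MeasureTheory

/-- There is no bounded holomorphic map `f : D → ℂⁿ` with `f(0)` purely
imaginary, `|Im f| ≤ R₁` on `D`, and radial boundary values satisfying `|Re f| = R`
almost everywhere on `∂D`, when `R₁ < R`. -/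
theorem stmt1 (n : ℕ) (R R₁ : ℝ) (hRR : R₁ < R)
    (f : ℂ → (Fin n → ℂ))
    (hf : DifferentiableOn ℂ f (Metric.ball 0 1))
    (hb : ∃ C, ∀ z ∈ Metric.ball (0:ℂ) 1, ‖f z‖ ≤ C)
    (h0 : ∀ j, (f 0 j).re = 0)
    (him : ∀ z ∈ Metric.ball (0:ℂ) 1,
      Real.sqrt (∑ j, (f z j).im ^ 2) ≤ R₁)
    (hbd : ∀ᵐ (θ : ℝ) ∂(volume.restrict (Set.Ioc (0:ℝ) (2*Real.pi))),
      Filter.Tendsto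
        (fun r : ℝ =>
          Real.sqrt (∑ j, (f ((r:ℂ) * Complex.exp ((θ:ℂ) * Complex.I)) j).re ^ 2))
        (nhdsWithin 1 (Set.Iio (1:ℝ))) (nhds R)) :
    False := by
  classical
  obtain ⟨C, hC⟩ := hb
  have hπ : (0:ℝ) < 2 * Real.pi := by positivity
  have h0mem : (0:ℂ) ∈ Metric.ball (0:ℂ) 1 := by simp
  have hC0 : 0 ≤ C := le_trans (norm_nonneg _) (hC 0 h0mem)
  set h : ℂ → ℂ := fun z => ∑ j, (f z j)^2 with hh
  have hdiff : DifferentiableOn ℂ h (Metric.ball 0 1) := by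
    apply DifferentiableOn.fun_sum
    intro j _
    exact (((ContinuousLinearMap.proj j : (Fin n → ℂ) →L[ℂ] ℂ).differentiable).comp_differentiableOn hf).pow 2
  have hR₁0 : 0 ≤ R₁ := le_trans (Real.sqrt_nonneg _) (him 0 h0mem)
  -- pointwise facts
  have hresq : ∀ z ∈ Metric.ball (0:ℂ) 1, ∑ j, (f z j).re ^ 2 ≤ (h z).re + R₁^2 := by
    intro z hz
    have hS : (0:ℝ) ≤ ∑ j, (f z j).im ^ 2 := Finset.sum_nonneg fun j _ => sq_nonneg _
    have h1 : ∑ j, (f z j).im ^ 2 ≤ R₁^2 := by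
      nlinarith [him z hz, Real.sq_sqrt hS, Real.sqrt_nonneg (∑ j, (f z j).im ^ 2)]
    have h2 : (h z).re = ∑ j, ((f z j).re ^ 2 - (f z j).im ^ 2) := by
      rw [hh]
      simp only [Complex.re_sum, pow_two, Complex.mul_re]
    rw [h2, Finset.sum_sub_distrib]
    linarith
  have hrebd : ∀ z ∈ Metric.ball (0:ℂ) 1, ∑ j, (f z j).re ^ 2 ≤ n * C^2 := by
    intro z hz
    calc ∑ j, (f z j).re ^ 2 ≤ ∑ _j : Fin n, C^2 := by
          apply Finset.sum_le_sum
          intro j _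
          have h1 : |(f z j).re| ≤ ‖f z j‖ := Complex.abs_re_le_norm _
          have h2 : ‖f z j‖ ≤ C :=
            le_trans (norm_le_pi_norm (f z) j) (hC z hz)
          nlinarith [norm_nonneg (f z j), abs_nonneg (f z j).re, sq_abs (f z j).re]
      _ = n * C^2 := by simp [Finset.sum_const, mul_comm]
  have h0le : (h 0).re ≤ 0 := by
    have : (h 0).re = ∑ j, ((f 0 j).re ^ 2 - (f 0 j).im ^ 2) := by
      rw [hh]; simp only [Complex.re_sum, pow_two, Complex.mul_re]
    rw [this]
    apply Finset.sum_nonpos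
    intro j _
    rw [h0 j]
    nlinarith [sq_nonneg (f 0 j).im]
  -- mean value property
  have hmapsto : ∀ r ∈ Set.Ioo (0:ℝ) 1, ∀ θ : ℝ, circleMap 0 r θ ∈ Metric.ball (0:ℂ) 1 := by
    intro r hr θ
    have : ‖circleMap 0 r θ‖ = |r| := norm_circleMap_zero r θ
    rw [Metric.mem_ball, dist_zero_right]
    show ‖circleMap 0 r θ‖ < 1
    rw [this, abs_of_pos hr.1]; exact hr.2
  have hcont : ∀ r ∈ Set.Ioo (0:ℝ) 1, Continuous fun θ : ℝ => h (circleMap 0 r θ) := by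
    intro r hr
    exact hdiff.continuousOn.comp_continuous (continuous_circleMap 0 r) (hmapsto r hr)
  have hfcont : ∀ r ∈ Set.Ioo (0:ℝ) 1, Continuous fun θ : ℝ => f (circleMap 0 r θ) := by
    intro r hr
    exact hf.continuousOn.comp_continuous (continuous_circleMap 0 r) (hmapsto r hr)
  have hmean : ∀ r ∈ Set.Ioo (0:ℝ) 1,
      ∫ θ in Set.Ioc (0:ℝ) (2*Real.pi), (h (circleMap 0 r θ)).re
        = 2*Real.pi * (h 0).re := by
    intro r hr
    have hd : DifferentiableOn ℂ h (Metric.closedBall 0 r) :=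
      hdiff.mono (Metric.closedBall_subset_ball hr.2)
    have hc := hd.circleIntegral_sub_inv_smul (Metric.mem_ball_self hr.1)
    rw [circleIntegral] at hc
    simp only [deriv_circleMap, sub_zero, smul_eq_mul] at hc
    have hne : ∀ θ : ℝ, circleMap 0 r θ ≠ 0 := fun θ => circleMap_ne_center (ne_of_gt hr.1)
    have heq : Set.EqOn (fun θ : ℝ => circleMap 0 r θ * Complex.I * ((circleMap 0 r θ)⁻¹ * h (circleMap 0 r θ)))
        (fun θ : ℝ => Complex.I * h (circleMap 0 r θ)) (Set.uIcc 0 (2*Real.pi)) := by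
      intro θ _
      field_simp [hne θ]
    rw [intervalIntegral.integral_congr heq, intervalIntegral.integral_const_mul] at hc
    have hint : ∫ θ in (0:ℝ)..(2*Real.pi), h (circleMap 0 r θ) = (2*Real.pi : ℝ) * h 0 := by
      apply mul_left_cancel₀ Complex.I_ne_zero
      rw [hc]
      push_cast
      ring
    have hIoc : ∫ θ in Set.Ioc (0:ℝ) (2*Real.pi), h (circleMap 0 r θ) = (2*Real.pi : ℝ) * h 0 := by
      rw [← intervalIntegral.integral_of_le hπ.le]; exact hint
    have hI : IntegrableOn (fun θ : ℝ => h (circleMap 0 r θ)) (Set.Ioc 0 (2*Real.pi)) volume :=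
      (hcont r hr).integrableOn_Ioc
    have := integral_re (μ := volume.restrict (Set.Ioc (0:ℝ) (2*Real.pi))) hI
    simp only [RCLike.re_to_complex] at this
    rw [this, hIoc, Complex.re_ofReal_mul]
  -- integral inequality
  have hineq : ∀ r ∈ Set.Ioo (0:ℝ) 1,
      ∫ θ in Set.Ioc (0:ℝ) (2*Real.pi), (∑ j, (f (circleMap 0 r θ) j).re ^ 2)
        ≤ 2*Real.pi * R₁^2 := by
    intro r hr
    have hcS : Continuous fun θ : ℝ => ∑ j, (f (circleMap 0 r θ) j).re ^ 2 := by
      apply continuous_finset_sum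
      intro j _
      exact (Complex.continuous_re.comp ((continuous_apply j).comp (hfcont r hr))).pow 2
    have hI1 : IntegrableOn (fun θ : ℝ => ∑ j, (f (circleMap 0 r θ) j).re ^ 2)
        (Set.Ioc 0 (2*Real.pi)) volume := hcS.integrableOn_Ioc
    have hI2 : IntegrableOn (fun θ : ℝ => (h (circleMap 0 r θ)).re + R₁^2)
        (Set.Ioc 0 (2*Real.pi)) volume :=
      ((Complex.continuous_re.comp (hcont r hr)).add continuous_const).integrableOn_Ioc
    have hmono : ∀ θ : ℝ, (∑ j, (f (circleMap 0 r θ) j).re ^ 2)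
        ≤ (h (circleMap 0 r θ)).re + R₁^2 := fun θ => hresq _ (hmapsto r hr θ)
    calc ∫ θ in Set.Ioc (0:ℝ) (2*Real.pi), (∑ j, (f (circleMap 0 r θ) j).re ^ 2)
        ≤ ∫ θ in Set.Ioc (0:ℝ) (2*Real.pi), ((h (circleMap 0 r θ)).re + R₁^2) :=
          integral_mono hI1 hI2 hmono
      _ = (∫ θ in Set.Ioc (0:ℝ) (2*Real.pi), (h (circleMap 0 r θ)).re)
            + ∫ _θ in Set.Ioc (0:ℝ) (2*Real.pi), R₁^2 := by
          exact integral_add ((Complex.continuous_re.comp (hcont r hr)).integrableOn_Ioc)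
            (integrableOn_const measure_Ioc_lt_top.ne)
      _ = 2*Real.pi * (h 0).re + 2*Real.pi * R₁^2 := by
          rw [hmean r hr, setIntegral_const, Real.volume_real_Ioc_of_le hπ.le, sub_zero,
            smul_eq_mul]
      _ ≤ 2*Real.pi * R₁^2 := by
          nlinarith [mul_nonpos_of_nonneg_of_nonpos hπ.le h0le]
  -- radial sequence
  have hcm : ∀ (r θ : ℝ), circleMap 0 r θ = (r:ℂ) * Complex.exp ((θ:ℂ) * Complex.I) := by
    intro r θ; simp [circleMap]
  set ρ : ℕ → ℝ := fun k => 1 - (1/2:ℝ)^(k+1) with hρdef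
  have hhalf : ∀ k : ℕ, 0 < (1/2:ℝ)^(k+1) ∧ (1/2:ℝ)^(k+1) ≤ 1/2 := by
    intro k
    constructor
    · positivity
    · calc (1/2:ℝ)^(k+1) ≤ (1/2:ℝ)^1 :=
            pow_le_pow_of_le_one (by norm_num) (by norm_num) (by omega)
        _ = 1/2 := pow_one _
  have hρmem : ∀ k, ρ k ∈ Set.Ioo (0:ℝ) 1 := by
    intro k
    obtain ⟨hk1, hk2⟩ := hhalf k
    constructor <;> simp only [hρdef] <;> linarith
  have hρt : Filter.Tendsto ρ Filter.atTop (nhdsWithin 1 (Set.Iio (1:ℝ))) := by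
    apply tendsto_nhdsWithin_of_tendsto_nhds_of_eventually_within
    · have h1 : Filter.Tendsto (fun k : ℕ => (1/2:ℝ)^(k+1)) Filter.atTop (nhds 0) := by
        have := tendsto_pow_atTop_nhds_zero_of_lt_one (show (0:ℝ) ≤ 1/2 by norm_num)
          (show (1/2:ℝ) < 1 by norm_num)
        exact this.comp (Filter.tendsto_add_atTop_nat 1)
      have h2 : Filter.Tendsto ρ Filter.atTop (nhds (1 - 0)) :=
        Filter.Tendsto.const_sub 1 h1
      rw [sub_zero] at h2
      exact h2
    · exact Filter.Eventually.of_forall fun k => (hρmem k).2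
  -- a.e. convergence of the squared radial means
  have hae : ∀ᵐ θ ∂(volume.restrict (Set.Ioc (0:ℝ) (2*Real.pi))),
      Filter.Tendsto (fun k => ∑ j, (f (circleMap 0 (ρ k) θ) j).re ^ 2)
        Filter.atTop (nhds (R^2)) := by
    filter_upwards [hbd] with θ hθ
    have h1 : Filter.Tendsto
        (fun k => Real.sqrt (∑ j, (f ((ρ k : ℂ) * Complex.exp ((θ:ℂ) * Complex.I)) j).re ^ 2))
        Filter.atTop (nhds R) := hθ.comp hρt
    have h2 := h1.pow 2
    have h3 : (fun k => (Real.sqrt (∑ j, (f ((ρ k : ℂ) * Complex.exp ((θ:ℂ) * Complex.I)) j).re ^ 2))^2)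
        = fun k => ∑ j, (f (circleMap 0 (ρ k) θ) j).re ^ 2 := by
      funext k
      rw [Real.sq_sqrt (Finset.sum_nonneg fun j _ => sq_nonneg _), hcm]
    rwa [h3] at h2
  -- dominated convergence
  have hdom : Filter.Tendsto
      (fun k => ∫ θ in Set.Ioc (0:ℝ) (2*Real.pi), (∑ j, (f (circleMap 0 (ρ k) θ) j).re ^ 2))
      Filter.atTop (nhds (∫ _θ in Set.Ioc (0:ℝ) (2*Real.pi), R^2)) := by
    apply tendsto_integral_of_dominated_convergence (bound := fun _ => (n:ℝ) * C^2)
    · intro k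
      have hcS : Continuous fun θ : ℝ => ∑ j, (f (circleMap 0 (ρ k) θ) j).re ^ 2 := by
        apply continuous_finset_sum
        intro j _
        exact (Complex.continuous_re.comp ((continuous_apply j).comp
          (hfcont (ρ k) (hρmem k)))).pow 2
      exact hcS.aestronglyMeasurable
    · exact integrableOn_const measure_Ioc_lt_top.ne
    · intro k
      apply Filter.Eventually.of_forall
      intro θ
      rw [Real.norm_eq_abs, abs_of_nonneg (Finset.sum_nonneg fun j _ => sq_nonneg _)]
      exact hrebd _ (hmapsto (ρ k) (hρmem k) θ)
    · exact hae
  have hconst : (∫ _θ in Set.Ioc (0:ℝ) (2*Real.pi), R^2) = 2*Real.pi * R^2 := by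
    rw [setIntegral_const, Real.volume_real_Ioc_of_le hπ.le, sub_zero, smul_eq_mul]
  rw [hconst] at hdom
  have hfin : 2*Real.pi * R^2 ≤ 2*Real.pi * R₁^2 :=
    le_of_tendsto hdom (Filter.Eventually.of_forall fun k => hineq (ρ k) (hρmem k))
  have hR2 : R^2 ≤ R₁^2 := (mul_le_mul_iff_right₀ hπ).mp hfin
  nlinarith [hR2, hR₁0, hRR]
end

section
/- Let μ(z) = Σ_{j=0}^{l} e^{α_j + m_j·z} be an exponential sum on ℂⁿ. Suppose at a point z there is an index set I ∋ 0 with |I| ≤ n such that {m_i}_{i∈I} is ℂ-linearly independent, Re(α_0 + m_0·z) = b(z) = max_j Re(α_j + m_j·z), and Re(α_j + m_j·z) ≤ b(z) − c' for all j ∉ I. If c' > log(Σ_{i∉I} |m_i·m_0^∨|), where m_0^∨ ∈ ℂⁿ satisfies m_0·m_0^∨ = 1 and m_j·m_0^∨ = 0 for j ∈ I \ {0}, then the directional derivative of μ at z in direction m_0^∨ is nonzero; hence z is not a critical point of μ. -/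
/-- Away from the `(n-1)`-skeleton, with the dominating exponents
`{m_i}_{i ∈ I}` (`0 ∈ I`, `|I| ≤ n`) ℂ-linearly independent and a dual vector `m₀^∨`,
a gap `c' > log (Σ_{i∉I} |m_i·m₀^∨|)` forces the directional derivative of the
exponential sum in direction `m₀^∨` to be nonzero; hence `z` is not a critical point. -/
theorem stmt3 (n l : ℕ) (m : Fin (l+1) → Fin n → ℂ) (α : Fin (l+1) → ℂ)
    (z : Fin n → ℂ) (I : Finset (Fin (l+1))) (h0I : (0 : Fin (l+1)) ∈ I)
    (hcard : I.card ≤ n)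
    (hli : LinearIndependent ℂ (fun i : I => m i))
    (m0v : Fin n → ℂ)
    (hdual0 : (∑ k, m 0 k * m0v k) = 1)
    (hdualj : ∀ j ∈ I, j ≠ 0 → (∑ k, m j k * m0v k) = 0)
    (c' : ℝ)
    (hc' : Real.log (∑ j ∈ Iᶜ, ‖∑ k, m j k * m0v k‖) < c')
    (hmax : ∀ j, (α j + ∑ k, m j k * z k).re ≤ (α 0 + ∑ k, m 0 k * z k).re)
    (hgap : ∀ j ∉ I,
      (α j + ∑ k, m j k * z k).re ≤ (α 0 + ∑ k, m 0 k * z k).re - c') :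
    (∑ j, Complex.exp (α j + ∑ k, m j k * z k) * (∑ k, m j k * m0v k)) ≠ 0 := by
  set f : Fin (l+1) → ℂ := fun j => Complex.exp (α j + ∑ k, m j k * z k) * (∑ k, m j k * m0v k) with hf
  set b : ℝ := (α 0 + ∑ k, m 0 k * z k).re with hb
  have hIsum : ∑ j ∈ I, f j = f 0 := by
    apply Finset.sum_eq_single_of_mem 0 h0I
    intro j hj hj0
    simp [hf, hdualj j hj hj0]
  have hsplit : ∑ j, f j = f 0 + ∑ j ∈ Iᶜ, f j := by
    rw [← Finset.sum_add_sum_compl I f, hIsum]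
  set S : ℝ := ∑ j ∈ Iᶜ, ‖∑ k, m j k * m0v k‖ with hS
  have hS0 : 0 ≤ S := Finset.sum_nonneg fun j _ => norm_nonneg _
  have hSe : S < Real.exp c' := by
    rcases eq_or_lt_of_le hS0 with h | h
    · rw [← h]; exact Real.exp_pos c'
    · calc S = Real.exp (Real.log S) := (Real.exp_log h).symm
        _ < Real.exp c' := Real.exp_lt_exp.mpr hc'
  have htail : ‖∑ j ∈ Iᶜ, f j‖ < Real.exp b := by
    calc ‖∑ j ∈ Iᶜ, f j‖ ≤ ∑ j ∈ Iᶜ, ‖f j‖ :=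
          norm_sum_le _ _
      _ ≤ ∑ j ∈ Iᶜ, Real.exp (b - c') * ‖∑ k, m j k * m0v k‖ := by
          apply Finset.sum_le_sum
          intro j hj
          rw [hf, norm_mul, Complex.norm_exp]
          apply mul_le_mul_of_nonneg_right _ (norm_nonneg _)
          exact Real.exp_le_exp.mpr (by have := hgap j (Finset.mem_compl.mp hj); linarith)
      _ = Real.exp (b - c') * S := by rw [← Finset.mul_sum]
      _ < Real.exp (b - c') * Real.exp c' := mul_lt_mul_of_pos_left hSe (Real.exp_pos _)
      _ = Real.exp b := by rw [← Real.exp_add]; ring_nf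
  have hf0 : ‖f 0‖ = Real.exp b := by
    simp [hf, hdual0, Complex.norm_exp, hb]
  intro h
  rw [hsplit] at h
  have heq : ‖f 0‖ = ‖∑ j ∈ Iᶜ, f j‖ := by
    rw [eq_neg_of_add_eq_zero_left h, norm_neg]
  rw [hf0] at heq
  linarith
end

section
/- Let Δ ⊂ ℂⁿ be a k-simplex with vertices m_0 = 0, m_1, …, m_k (k ≤ n), and define Vol_ℂ(Δ) as the (2k)-volume of the simplex Δ^ℂ with vertices {0, m_1, Jm_1, …, m_k, Jm_k}, where J is multiplication by i. Then Vol_ℂ(Δ) is independent of which vertex of Δ is chosen as the base point 0 (i.e., translating Δ so any of its vertices is at the origin and forming the corresponding Δ^ℂ gives the same volume). -/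
open MeasureTheory

noncomputable instance (n : ℕ) : MeasurableSpace (EuclideanSpace ℂ (Fin n)) := borel _
instance (n : ℕ) : BorelSpace (EuclideanSpace ℂ (Fin n)) := ⟨rfl⟩

/-- The complexified volume `Vol_ℂ` of the simplex with edge vectors `w j` (from a chosen
base vertex): the `2l`-dimensional Hausdorff measure of the convex hull of
`{0} ∪ {w j} ∪ {i·w j}`. -/
noncomputable def volC {n : ℕ} (l : ℕ) (w : Fin l → EuclideanSpace ℂ (Fin n)) : ℝ :=
  (μH[(2 * l : ℝ)] (convexHull ℝ (insert (0 : EuclideanSpace ℂ (Fin n))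
    (Set.range w ∪ Set.range fun j => Complex.I • w j)))).toReal

namespace Stmt4Aux

open Set Module Complex

variable {k n d : ℕ}

/-! ### A linear map sending the standard basis to a given family -/

/-- The complex-linear map sending the `j`-th standard basis vector to `w j`. -/
noncomputable def lmap {N : Type*} [AddCommGroup N] [Module ℂ N] (w : Fin k → N) :
    EuclideanSpace ℂ (Fin k) →ₗ[ℂ] N where
  toFun x := ∑ j, x j • w j
  map_add' x y := by
    simp only [PiLp.add_apply, add_smul, Finset.sum_add_distrib]
  map_smul' c x := by
    simp only [PiLp.smul_apply, smul_eq_mul, RingHom.id_apply, Finset.smul_sum, mul_smul]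

lemma lmap_apply {N : Type*} [AddCommGroup N] [Module ℂ N] (w : Fin k → N)
    (x : EuclideanSpace ℂ (Fin k)) : lmap w x = ∑ j, x j • w j := rfl

lemma lmap_single {N : Type*} [AddCommGroup N] [Module ℂ N] (w : Fin k → N) (j : Fin k) (c : ℂ) :
    lmap w (EuclideanSpace.single j c) = c • w j := by
  rw [lmap_apply, Finset.sum_eq_single j]
  · rw [EuclideanSpace.single_apply, if_pos rfl]
  · intro i _ hij
    rw [EuclideanSpace.single_apply, if_neg hij, zero_smul]
  · intro h; exact absurd (Finset.mem_univ j) h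

/-! ### The base-change matrix over `ℤ` -/

/-- Coordinate vector of the vertex `c` relative to the base vertex `a`. -/
def ev (a c : Fin (k+1)) : Fin k → ℤ := fun i => if a.succAbove i = c then 1 else 0

lemma ev_self (a : Fin (k+1)) : ev a a = 0 := by
  funext i; simp [ev, Fin.succAbove_ne a i]

lemma ev_succAbove (a : Fin (k+1)) (m i : Fin k) :
    ev a (a.succAbove m) i = if i = m then 1 else 0 := by
  simp [ev, Fin.succAbove_right_injective.eq_iff]

/-- The base-change matrix from base vertex `a` to base vertex `b`. -/
def mat (a b : Fin (k+1)) : Matrix (Fin k) (Fin k) ℤ :=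
  Matrix.of fun i j => ev a (b.succAbove j) i - ev a b i

lemma mat_apply (a b : Fin (k+1)) (i j : Fin k) :
    mat a b i j = ev a (b.succAbove j) i - ev a b i := rfl

lemma mat_sum (a b c : Fin (k+1)) (i : Fin k) :
    ∑ l, mat a b i l * ev b c l = ev a c i - ev a b i := by
  rcases eq_or_ne c b with rfl | hc
  · simp [ev_self]
  · obtain ⟨m, hm⟩ := Fin.exists_succAbove_eq hc
    subst hm
    rw [Finset.sum_eq_single m]
    · rw [ev_succAbove, if_pos rfl, mul_one, mat_apply]
    · intro l _ hl
      rw [ev_succAbove, if_neg hl, mul_zero]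
    · intro h; exact absurd (Finset.mem_univ m) h

lemma mat_mul (a b : Fin (k+1)) : mat a b * mat b a = 1 := by
  ext i j
  rw [Matrix.mul_apply]
  have h : ∀ l, mat a b i l * mat b a l j
      = mat a b i l * ev b (a.succAbove j) l - mat a b i l * ev b a l := by
    intro l
    rw [mat_apply b a, mul_sub]
  rw [Finset.sum_congr rfl fun l _ => h l, Finset.sum_sub_distrib, mat_sum, mat_sum,
    ev_self, ev_succAbove]
  simp [Matrix.one_apply]

lemma mat_det_sq (a b : Fin (k+1)) : (mat a b).det ^ 2 = 1 := by
  have h := congrArg Matrix.det (mat_mul a b)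
  rw [Matrix.det_mul, Matrix.det_one] at h
  rcases Int.isUnit_iff.mp (IsUnit.of_mul_eq_one _ h) with h1 | h1 <;> rw [h1] <;> ring

/-! ### The base-change endomorphism of `ℂᵏ` and its real determinant -/

/-- The base-change linear map on `ℂᵏ`, with columns given by `mat a b`. -/
noncomputable def Mmap (a b : Fin (k+1)) :
    EuclideanSpace ℂ (Fin k) →ₗ[ℂ] EuclideanSpace ℂ (Fin k) :=
  lmap fun j => (WithLp.equiv 2 (Fin k → ℂ)).symm fun i => ((mat a b i j : ℤ) : ℂ)

/-- Sigma-indexed real basis of `ℂᵏ`. -/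
noncomputable def bE (k : ℕ) : Basis ((_ : Fin k) × Fin 2) ℝ (EuclideanSpace ℂ (Fin k)) :=
  (Pi.basis fun _ : Fin k => Complex.basisOneI).map (WithLp.linearEquiv 2 ℝ (Fin k → ℂ)).symm

/-- Product-indexed real basis of `ℂᵏ`. -/
noncomputable def bP (k : ℕ) : Basis (Fin k × Fin 2) ℝ (EuclideanSpace ℂ (Fin k)) :=
  (bE k).reindex (Equiv.sigmaEquivProd (Fin k) (Fin 2))

lemma toMatrix_Mmap (a b : Fin (k+1)) :
    LinearMap.toMatrix (bP k) (bP k) ((Mmap a b).restrictScalars ℝ)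
      = Matrix.kroneckerMap (· * ·) ((mat a b).map fun z => (z : ℝ))
          (1 : Matrix (Fin 2) (Fin 2) ℝ) := by
  ext ⟨i, s⟩ ⟨j, t⟩
  rw [LinearMap.toMatrix_apply]
  have hb : bP k (j, t) = EuclideanSpace.single j (Complex.basisOneI t) := by
    rw [bP, Basis.reindex_apply, bE, Basis.map_apply]
    have : (Pi.basis fun _ : Fin k => Complex.basisOneI) ((Equiv.sigmaEquivProd (Fin k) (Fin 2)).symm (j, t))
        = Pi.single j (Complex.basisOneI t) := by
      rw [Pi.basis_apply]
      rfl
    rw [this]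
    rfl
  rw [hb]
  have happ : ((Mmap a b).restrictScalars ℝ) (EuclideanSpace.single j (Complex.basisOneI t))
      = Complex.basisOneI t • ((WithLp.equiv 2 (Fin k → ℂ)).symm fun i => ((mat a b i j : ℤ) : ℂ)) := by
    exact lmap_single _ j _
  rw [happ]
  have hrepr : ∀ (y : EuclideanSpace ℂ (Fin k)),
      (bP k).repr y (i, s) = Complex.basisOneI.repr (y i) s := by
    intro y
    rw [bP, Basis.repr_reindex_apply, bE, Basis.map_repr]
    rw [LinearEquiv.trans_apply]
    rw [Pi.basis_repr]
    rfl
  rw [hrepr]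
  have hyi : (Complex.basisOneI t •
        ((WithLp.equiv 2 (Fin k → ℂ)).symm fun i => ((mat a b i j : ℤ) : ℂ))) i
      = Complex.basisOneI t * ((mat a b i j : ℤ) : ℂ) := by
    rw [PiLp.smul_apply, WithLp.equiv_symm_apply, PiLp.toLp_apply, smul_eq_mul]
  rw [hyi, Matrix.kroneckerMap_apply, Matrix.map_apply]
  fin_cases s <;> fin_cases t <;>
    simp [Complex.coe_basisOneI_repr, Complex.coe_basisOneI, Matrix.one_apply]

lemma det_Mmap (a b : Fin (k+1)) :
    LinearMap.det ((Mmap a b).restrictScalars ℝ) = 1 := by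
  rw [← LinearMap.det_toMatrix (bP k), toMatrix_Mmap]
  rw [Matrix.det_kronecker, Matrix.det_one, one_pow, mul_one, Fintype.card_fin]
  have hmap : ((mat a b).map fun z => (z : ℝ)).det = (((mat a b).det : ℤ) : ℝ) := by
    rw [show ((mat a b).map fun z => (z : ℝ)) = (Int.castRingHom ℝ).mapMatrix (mat a b) from rfl,
      ← RingHom.map_det]
    rfl
  rw [hmap]
  have := mat_det_sq a b
  push_cast
  exact_mod_cast congrArg (fun z : ℤ => (z : ℝ)) this

/-! ### Coordinate embeddings and projections -/

/-- The linear coordinate embedding `ℂᵈ → ℂⁿ`, for `d ≤ n`. -/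
noncomputable def embL (h : d ≤ n) :
    EuclideanSpace ℂ (Fin d) →ₗ[ℂ] EuclideanSpace ℂ (Fin n) where
  toFun x := (WithLp.equiv 2 (Fin n → ℂ)).symm
    fun i => if hi : (i : ℕ) < d then x ⟨i, hi⟩ else 0
  map_add' x y := by
    apply (WithLp.equiv 2 (Fin n → ℂ)).injective
    funext i
    by_cases hi : (i : ℕ) < d <;>
      simp [hi, WithLp.equiv_symm_apply, PiLp.toLp_apply, PiLp.add_apply]
  map_smul' c x := by
    apply (WithLp.equiv 2 (Fin n → ℂ)).injective
    funext i
    by_cases hi : (i : ℕ) < d <;>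
      simp [hi, WithLp.equiv_symm_apply, PiLp.toLp_apply, PiLp.smul_apply]

lemma embL_apply (h : d ≤ n) (x : EuclideanSpace ℂ (Fin d)) (i : Fin n) :
    embL h x i = if hi : (i : ℕ) < d then x ⟨i, hi⟩ else 0 := by
  show ((WithLp.equiv 2 (Fin n → ℂ)).symm
    fun i => if hi : (i : ℕ) < d then x ⟨i, hi⟩ else 0) i = _
  rw [WithLp.equiv_symm_apply, PiLp.toLp_apply]

/-- The isometric embedding of `ℂᵈ` into `ℂⁿ` (first `d` coordinates), for `d ≤ n`. -/
noncomputable def embLI (h : d ≤ n) :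
    EuclideanSpace ℂ (Fin d) →ₗᵢ[ℂ] EuclideanSpace ℂ (Fin n) where
  toLinearMap := embL h
  norm_map' x := by
    rw [EuclideanSpace.norm_eq, EuclideanSpace.norm_eq]
    congr 1
    set g : ℕ → ℝ := fun m => if hm : m < d then ‖x ⟨m, hm⟩‖ ^ 2 else 0 with hg
    have h1 : ∑ i : Fin n, ‖embL h x i‖ ^ 2 = ∑ i : Fin n, g (i : ℕ) := by
      refine Finset.sum_congr rfl fun i _ => ?_
      rw [embL_apply]
      by_cases hi : (i : ℕ) < d
      · rw [dif_pos hi, hg]; simp [hi]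
      · rw [dif_neg hi, hg]; simp [hi]
    rw [h1, Fin.sum_univ_eq_sum_range g n,
      ← Finset.sum_subset (Finset.range_subset_range.2 h) (fun m _ hm => by
        rw [hg]; exact dif_neg (by simpa using hm)),
      ← Fin.sum_univ_eq_sum_range g d]
    refine Finset.sum_congr rfl fun i _ => ?_
    rw [hg]
    simp

lemma embLI_apply (h : d ≤ n) (x : EuclideanSpace ℂ (Fin d)) (i : Fin n) :
    embLI h x i = if hi : (i : ℕ) < d then x ⟨i, hi⟩ else 0 :=
  embL_apply h x i

/-- The coordinate projection `ℂⁿ → ℂᵏ`, for `k ≤ n`. -/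
noncomputable def projL (h : k ≤ n) :
    EuclideanSpace ℂ (Fin n) →ₗ[ℂ] EuclideanSpace ℂ (Fin k) where
  toFun y := (WithLp.equiv 2 (Fin k → ℂ)).symm fun j => y (Fin.castLE h j)
  map_add' x y := by
    apply (WithLp.equiv 2 (Fin k → ℂ)).injective
    funext j
    simp [WithLp.equiv_symm_apply, PiLp.toLp_apply, PiLp.add_apply]
  map_smul' c x := by
    apply (WithLp.equiv 2 (Fin k → ℂ)).injective
    funext j
    simp [WithLp.equiv_symm_apply, PiLp.toLp_apply, PiLp.smul_apply]

lemma projL_apply (h : k ≤ n) (y : EuclideanSpace ℂ (Fin n)) (j : Fin k) :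
    projL h y j = y (Fin.castLE h j) := by
  show ((WithLp.equiv 2 (Fin k → ℂ)).symm fun j => y (Fin.castLE h j)) j = _
  rw [WithLp.equiv_symm_apply, PiLp.toLp_apply]

lemma ext_euclidean {x y : EuclideanSpace ℂ (Fin n)} (h : ∀ i, x i = y i) : x = y := by
  apply (WithLp.equiv 2 (Fin n → ℂ)).injective
  funext i
  exact h i

lemma projL_embLI (h1 : d ≤ k) (hk : k ≤ n) (u : EuclideanSpace ℂ (Fin d)) :
    projL hk (embLI (h1.trans hk) u) = embLI h1 u := by
  apply ext_euclidean
  intro j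
  rw [projL_apply]
  simp [embLI_apply, Fin.coe_castLE]

lemma embLI_embLI (h1 : d ≤ k) (hk : k ≤ n) (u : EuclideanSpace ℂ (Fin d)) :
    embLI hk (embLI h1 u) = embLI (h1.trans hk) u := by
  apply ext_euclidean
  intro i
  rw [embLI_apply, embLI_apply]
  by_cases hid : (i : ℕ) < d
  · simp [embLI_apply, hid, lt_of_lt_of_le hid h1]
  · by_cases hik : (i : ℕ) < k
    · simp [embLI_apply, hid, hik]
    · simp [embLI_apply, hid, hik]

/-! ### Factoring a linear map through an endomorphism of `ℂᵏ` up to isometry -/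

lemma exists_linmap_measure_eq (hk : k ≤ n)
    (f : EuclideanSpace ℂ (Fin k) →ₗ[ℂ] EuclideanSpace ℂ (Fin n)) :
    ∃ T : EuclideanSpace ℂ (Fin k) →ₗ[ℂ] EuclideanSpace ℂ (Fin k),
      ∀ s : Set (EuclideanSpace ℂ (Fin k)),
        μH[(2 * k : ℝ)] (⇑f '' s) = μH[(2 * k : ℝ)] (⇑T '' s) := by
  set S := LinearMap.range f with hS
  have hd : finrank ℂ S ≤ k := by
    have h1 := LinearMap.finrank_range_le f
    rwa [finrank_euclideanSpace_fin] at h1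
  set o := stdOrthonormalBasis ℂ S with ho
  set L : S →ₗᵢ[ℂ] EuclideanSpace ℂ (Fin n) :=
    (embLI (hd.trans hk)).comp o.repr.toLinearIsometry with hL
  set E := L.extend with hE
  set T := (projL hk) ∘ₗ (E.toLinearMap ∘ₗ f) with hT
  refine ⟨T, fun s => ?_⟩
  have hTx : ∀ x, embLI hk (T x) = E (f x) := by
    intro x
    have h1 : E (f x) = L ⟨f x, LinearMap.mem_range_self f x⟩ :=
      LinearIsometry.extend_apply L ⟨f x, LinearMap.mem_range_self f x⟩
    have h2 : L ⟨f x, LinearMap.mem_range_self f x⟩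
        = embLI (hd.trans hk) (o.repr ⟨f x, LinearMap.mem_range_self f x⟩) := rfl
    have h3 : T x = projL hk (E (f x)) := rfl
    rw [h3, h1, h2, projL_embLI hd hk, embLI_embLI hd hk]
  have himg : ⇑E '' (⇑f '' s) = ⇑(embLI hk) '' (⇑T '' s) := by
    rw [Set.image_image, Set.image_image]
    exact Set.image_congr fun x _ => (hTx x).symm
  calc μH[(2 * k : ℝ)] (⇑f '' s)
      = μH[(2 * k : ℝ)] (⇑E '' (⇑f '' s)) := by
        rw [E.isometry.hausdorffMeasure_image (Or.inl (by positivity))]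
    _ = μH[(2 * k : ℝ)] (⇑(embLI hk) '' (⇑T '' s)) := by rw [himg]
    _ = μH[(2 * k : ℝ)] (⇑T '' s) := by
        rw [(embLI hk).isometry.hausdorffMeasure_image (Or.inl (by positivity))]

lemma finrank_real_euclidean (k : ℕ) : finrank ℝ (EuclideanSpace ℂ (Fin k)) = 2 * k := by
  have h := finrank_mul_finrank ℝ ℂ (EuclideanSpace ℂ (Fin k))
  rw [Complex.finrank_real_complex, finrank_euclideanSpace_fin] at h
  exact h.symm

lemma measure_image_Mmap_eq (hk : k ≤ n)
    (f : EuclideanSpace ℂ (Fin k) →ₗ[ℂ] EuclideanSpace ℂ (Fin n))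
    (M : EuclideanSpace ℂ (Fin k) →ₗ[ℂ] EuclideanSpace ℂ (Fin k))
    (hM : LinearMap.det (M.restrictScalars ℝ) = 1) (s : Set (EuclideanSpace ℂ (Fin k))) :
    μH[(2 * k : ℝ)] (⇑f '' (⇑M '' s)) = μH[(2 * k : ℝ)] (⇑f '' s) := by
  obtain ⟨T, hT⟩ := exists_linmap_measure_eq hk f
  haveI haar : Measure.IsAddHaarMeasure (μH[(2 * k : ℝ)] : Measure (EuclideanSpace ℂ (Fin k))) := by
    have hr : (2 * k : ℝ) = ((finrank ℝ (EuclideanSpace ℂ (Fin k)) : ℕ) : ℝ) := by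
      rw [finrank_real_euclidean]; push_cast; ring
    rw [hr]
    infer_instance
  rw [hT, hT s]
  have h1 : ⇑T '' (⇑M '' s) = ⇑((T.restrictScalars ℝ) ∘ₗ (M.restrictScalars ℝ)) '' s := by
    rw [← Set.image_comp]
    rfl
  have h2 : ⇑T '' s = ⇑(T.restrictScalars ℝ) '' s := rfl
  rw [h1, h2, Measure.addHaar_image_linearMap, Measure.addHaar_image_linearMap,
    LinearMap.det_comp, hM, mul_one]

/-! ### Relating the two families of edge vectors -/

lemma evsum (v : Fin (k+1) → EuclideanSpace ℂ (Fin n)) (a c : Fin (k+1)) :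
    ∑ i, ((ev a c i : ℤ) : ℂ) • (v (a.succAbove i) - v a) = v c - v a := by
  rcases eq_or_ne c a with rfl | hc
  · simp [ev_self]
  · obtain ⟨m, hm⟩ := Fin.exists_succAbove_eq hc
    subst hm
    rw [Finset.sum_eq_single m]
    · rw [ev_succAbove, if_pos rfl]; simp
    · intro i _ him
      rw [ev_succAbove, if_neg him]; simp
    · intro h; exact absurd (Finset.mem_univ m) h

lemma lmap_col (v : Fin (k+1) → EuclideanSpace ℂ (Fin n)) (a b : Fin (k+1)) (j : Fin k) :
    lmap (fun j => v (a.succAbove j) - v a)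
        ((WithLp.equiv 2 (Fin k → ℂ)).symm fun i => ((mat a b i j : ℤ) : ℂ))
      = v (b.succAbove j) - v b := by
  rw [lmap_apply]
  have h1 : ∀ i : Fin k, (((WithLp.equiv 2 (Fin k → ℂ)).symm
        fun i => ((mat a b i j : ℤ) : ℂ)) : EuclideanSpace ℂ (Fin k)) i
        • (v (a.succAbove i) - v a)
      = ((ev a (b.succAbove j) i : ℤ) : ℂ) • (v (a.succAbove i) - v a)
        - ((ev a b i : ℤ) : ℂ) • (v (a.succAbove i) - v a) := by
    intro i
    rw [WithLp.equiv_symm_apply, PiLp.toLp_apply, mat_apply]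
    push_cast
    rw [sub_smul]
  rw [Finset.sum_congr rfl fun i _ => h1 i, Finset.sum_sub_distrib, evsum, evsum]
  abel

lemma lmap_Mmap (v : Fin (k+1) → EuclideanSpace ℂ (Fin n)) (a b : Fin (k+1))
    (x : EuclideanSpace ℂ (Fin k)) :
    lmap (fun j => v (a.succAbove j) - v a) (Mmap a b x)
      = lmap (fun j => v (b.succAbove j) - v b) x := by
  rw [Mmap, lmap_apply (w := fun j => (WithLp.equiv 2 (Fin k → ℂ)).symm
    fun i => ((mat a b i j : ℤ) : ℂ)), map_sum]
  rw [lmap_apply (w := fun j => v (b.succAbove j) - v b)]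
  refine Finset.sum_congr rfl fun j _ => ?_
  rw [LinearMap.map_smul, lmap_col]

/-! ### Image of the standard complexified simplex -/

lemma image_hull (w : Fin k → EuclideanSpace ℂ (Fin n)) :
    ⇑(lmap w) '' (convexHull ℝ (insert (0 : EuclideanSpace ℂ (Fin k))
        (Set.range (fun j => EuclideanSpace.single j (1 : ℂ))
          ∪ Set.range fun j => Complex.I • EuclideanSpace.single j (1 : ℂ))))
      = convexHull ℝ (insert (0 : EuclideanSpace ℂ (Fin n))
          (Set.range w ∪ Set.range fun j => Complex.I • w j)) := by
  have hcoe : ⇑(lmap w) = ⇑((lmap w).restrictScalars ℝ) := rfl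
  rw [hcoe, ((lmap w).restrictScalars ℝ).image_convexHull]
  congr 1
  rw [Set.image_insert_eq, map_zero]
  congr 1
  rw [Set.image_union, ← Set.range_comp, ← Set.range_comp]
  have h1 : (⇑((lmap w).restrictScalars ℝ) ∘ fun j => EuclideanSpace.single j (1 : ℂ)) = w := by
    funext j
    show lmap w (EuclideanSpace.single j 1) = w j
    rw [lmap_single, one_smul]
  have h2 : (⇑((lmap w).restrictScalars ℝ) ∘ fun j => Complex.I • EuclideanSpace.single j (1 : ℂ))
      = fun j => Complex.I • w j := by
    funext j
    show lmap w (Complex.I • EuclideanSpace.single j 1) = Complex.I • w j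
    rw [LinearMap.map_smul, lmap_single, one_smul]
  rw [h1, h2]

end Stmt4Aux

/-- `Vol_ℂ(Δ)` is independent of the choice of base vertex of `Δ`:
for a `k`-simplex with vertices `v 0, …, v k` in `ℂⁿ` (`k ≤ n`), the complexified volume
computed with base vertex `v a` equals the one computed with base vertex `v b`. -/
theorem stmt4 (n k : ℕ) (hk : k ≤ n)
    (v : Fin (k+1) → EuclideanSpace ℂ (Fin n)) (a b : Fin (k+1)) :
    volC k (fun j => v (a.succAbove j) - v a)
      = volC k (fun j => v (b.succAbove j) - v b) := by
  classical
  open Stmt4Aux in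
  set wa := fun j => v (a.succAbove j) - v a with hwa
  set wb := fun j => v (b.succAbove j) - v b with hwb
  set Δ : Set (EuclideanSpace ℂ (Fin k)) := convexHull ℝ (insert (0 : EuclideanSpace ℂ (Fin k))
    (Set.range (fun j => EuclideanSpace.single j (1 : ℂ))
      ∪ Set.range fun j => Complex.I • EuclideanSpace.single j (1 : ℂ))) with hΔ
  have hKa : convexHull ℝ (insert (0 : EuclideanSpace ℂ (Fin n))
      (Set.range wa ∪ Set.range fun j => Complex.I • wa j)) = ⇑(lmap wa) '' Δ :=
    (image_hull wa).symm
  have hKb : convexHull ℝ (insert (0 : EuclideanSpace ℂ (Fin n))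
      (Set.range wb ∪ Set.range fun j => Complex.I • wb j)) = ⇑(lmap wb) '' Δ :=
    (image_hull wb).symm
  have hMb : ⇑(lmap wb) '' Δ = ⇑(lmap wa) '' (⇑(Mmap a b) '' Δ) := by
    rw [Set.image_image]
    exact Set.image_congr fun x _ => (lmap_Mmap v a b x).symm
  unfold volC
  rw [hKa, hKb, hMb, measure_image_Mmap_eq hk (lmap wa) (Mmap a b) (det_Mmap a b) Δ]
end
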